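/- For every λ > 0 the function φ_λ(x) = √λ √(sech((2/√3)λx)) satisfies E(φ_λ, ℝ) = 0, where E(u,ℝ) = (1/2)∫_ℝ |u'|² dx - (1/6)∫_ℝ |u|⁶ dx. -/

import Mathlib

open Real MeasureTheory Filter Set

private lemma cosh_lb (t : ℝ) : 1 + t ^ 2 / 2 ≤ Real.cosh t := by
  have h2 : Real.cosh t = 1 + 2 * Real.sinh (t / 2) ^ 2 := by
    have hsq := Real.cosh_sq (t / 2)
    have h := Real.cosh_two_mul (t / 2)
    rw [show 2 * (t / 2) = t by ring] at h
    linarith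
  have hst : (t / 2) ^ 2 ≤ Real.sinh (t / 2) ^ 2 := by
    rcases le_total 0 t with h0 | h0
    · have h1 : t / 2 ≤ Real.sinh (t / 2) := Real.self_le_sinh_iff.mpr (by linarith)
      nlinarith
    · have h1 : Real.sinh (t / 2) ≤ t / 2 := Real.sinh_le_self_iff.mpr (by linarith)
      nlinarith
  nlinarith

private lemma tendsto_sinh_top : Filter.Tendsto Real.sinh Filter.atTop Filter.atTop :=
  tendsto_atTop_mono' _ (Filter.eventually_atTop.2
    ⟨0, fun _ hx => Real.self_le_sinh_iff.mpr hx⟩) tendsto_id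

private lemma tendsto_sinh_bot : Filter.Tendsto Real.sinh Filter.atBot Filter.atBot :=
  tendsto_atBot_mono' _ (Filter.eventually_atBot.2
    ⟨0, fun _ hx => Real.sinh_le_self_iff.mpr hx⟩) tendsto_id

private lemma tendsto_cosh_top : Filter.Tendsto Real.cosh Filter.atTop Filter.atTop :=
  tendsto_atTop_mono (fun x => show id x ≤ Real.cosh x by
    simp only [id]; nlinarith [cosh_lb x, sq_nonneg (x - 1)]) tendsto_id

private lemma tendsto_cosh_bot : Filter.Tendsto Real.cosh Filter.atBot Filter.atTop :=
  tendsto_atTop_mono (fun x => (by nlinarith [cosh_lb x, sq_nonneg (x + 1)] :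
    -x ≤ Real.cosh x)) tendsto_neg_atBot_atTop

private lemma abs_sinh_le_cosh (t : ℝ) : |Real.sinh t| ≤ Real.cosh t := by
  rw [abs_le]
  constructor
  · have := Real.sinh_lt_cosh (x := -t)
    rw [Real.sinh_neg, Real.cosh_neg] at this
    linarith
  · exact (Real.sinh_lt_cosh t).le

set_option maxHeartbeats 1000000 in
/-- the critical soliton has zero energy:
`E(φ_λ, ℝ) = (1/2)∫|φ_λ'|² - (1/6)∫|φ_λ|⁶ = 0` for every `λ > 0`. -/
theorem critical_soliton_zero_energy (lam : ℝ) (hlam : 0 < lam) :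
    (1 / 2) * (∫ x : ℝ, (deriv (fun y : ℝ =>
        Real.sqrt lam * Real.sqrt (1 / Real.cosh ((2 / Real.sqrt 3) * lam * y))) x) ^ 2)
      - (1 / 6) * (∫ x : ℝ,
        (Real.sqrt lam * Real.sqrt (1 / Real.cosh ((2 / Real.sqrt 3) * lam * x))) ^ 6)
      = 0 := by
  have h3 : (0:ℝ) < Real.sqrt 3 := Real.sqrt_pos.mpr (by norm_num)
  obtain ⟨c, hc_def⟩ : ∃ c : ℝ, c = 2 / Real.sqrt 3 * lam := ⟨_, rfl⟩
  simp only [← hc_def]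
  have hc : 0 < c := by rw [hc_def]; positivity
  have hcosh : ∀ x : ℝ, 0 < Real.cosh (c * x) := fun x => Real.cosh_pos (c * x)
  have hinvpos : ∀ x : ℝ, 0 < 1 / Real.cosh (c * x) := fun x => by positivity
  have hlin : ∀ x : ℝ, HasDerivAt (fun y : ℝ => c * y) c x := fun x => by
    simpa using (hasDerivAt_id x).const_mul c
  set φ : ℝ → ℝ := fun y : ℝ => Real.sqrt lam * Real.sqrt (1 / Real.cosh (c * y)) with hφ
  set D : ℝ → ℝ := fun x : ℝ =>
    Real.sqrt lam * (-(Real.sinh (c * x) * c) / Real.cosh (c * x) ^ 2 /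
      (2 * Real.sqrt (1 / Real.cosh (c * x)))) with hD
  have hu : ∀ x : ℝ, HasDerivAt (fun y : ℝ => 1 / Real.cosh (c * y))
      (-(Real.sinh (c * x) * c) / Real.cosh (c * x) ^ 2) x := by
    intro x
    have := ((hlin x).cosh).fun_inv (hcosh x).ne'
    simpa [one_div] using this
  have hphi : ∀ x : ℝ, HasDerivAt φ (D x) x := fun x =>
    ((hu x).sqrt (hinvpos x).ne').const_mul (Real.sqrt lam)
  set A : ℝ → ℝ := fun x => lam * c ^ 2 / 4 *
    (Real.sinh (c * x) ^ 2 / Real.cosh (c * x) ^ 3) with hA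
  set B : ℝ → ℝ := fun x => lam ^ 3 * (1 / Real.cosh (c * x)) ^ 3 with hB
  have hsqlam : Real.sqrt lam ^ 2 = lam := Real.sq_sqrt hlam.le
  have hDsq : ∀ x : ℝ, D x ^ 2 = A x := by
    intro x
    have hsqu : Real.sqrt (1 / Real.cosh (c * x)) ^ 2 = 1 / Real.cosh (c * x) :=
      Real.sq_sqrt (hinvpos x).le
    have hsu : (0:ℝ) < Real.sqrt (1 / Real.cosh (c * x)) := Real.sqrt_pos.mpr (hinvpos x)
    have hh := (hcosh x).ne'
    simp only [hD, hA]
    rw [mul_pow, div_pow, div_pow, mul_pow, hsqu, hsqlam]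
    field_simp
    ring
  have hpow6 : ∀ x : ℝ, φ x ^ 6 = B x := by
    intro x
    simp only [hφ, hB]
    rw [mul_pow, show (6:ℕ) = 2 * 3 from rfl, pow_mul, pow_mul, hsqlam,
      Real.sq_sqrt (hinvpos x).le]
  set F₁ : ℝ → ℝ := fun x => lam * c / 8 *
    (Real.arctan (Real.sinh (c * x)) - Real.sinh (c * x) / Real.cosh (c * x) ^ 2) with hF₁def
  set F₂ : ℝ → ℝ := fun x => lam ^ 3 / (2 * c) *
    (Real.sinh (c * x) / Real.cosh (c * x) ^ 2 + Real.arctan (Real.sinh (c * x))) with hF₂def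
  have hsinh : ∀ x : ℝ, HasDerivAt (fun y : ℝ => Real.sinh (c * y))
      (Real.cosh (c * x) * c) x := fun x => (hlin x).sinh
  have hcosh2 : ∀ x : ℝ, HasDerivAt (fun y : ℝ => Real.cosh (c * y) ^ 2)
      ((2 : ℕ) * Real.cosh (c * x) ^ 1 * (Real.sinh (c * x) * c)) x := fun x =>
    ((hlin x).cosh).pow 2
  have harc : ∀ x : ℝ, HasDerivAt (fun y : ℝ => Real.arctan (Real.sinh (c * y)))
      (1 / (1 + Real.sinh (c * x) ^ 2) * (Real.cosh (c * x) * c)) x := fun x =>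
    (hsinh x).arctan
  have hratio : ∀ x : ℝ, HasDerivAt (fun y : ℝ => Real.sinh (c * y) / Real.cosh (c * y) ^ 2)
      ((Real.cosh (c * x) * c * Real.cosh (c * x) ^ 2 -
        Real.sinh (c * x) * ((2 : ℕ) * Real.cosh (c * x) ^ 1 * (Real.sinh (c * x) * c))) /
        (Real.cosh (c * x) ^ 2) ^ 2) x := fun x =>
    (hsinh x).div (hcosh2 x) (by positivity)
  have hrel : ∀ x : ℝ, (1 : ℝ) + Real.sinh (c * x) ^ 2 = Real.cosh (c * x) ^ 2 := by
    intro x; rw [Real.cosh_sq]; ring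
  have hF₁ : ∀ x : ℝ, HasDerivAt F₁ (A x) x := by
    intro x
    have h := ((harc x).sub (hratio x)).const_mul (lam * c / 8)
    convert h using 1
    · rfl
    · rfl
    · rfl
    rw [hrel x]
    have hh := (hcosh x).ne'
    simp only [hA]
    field_simp
    ring
  have hF₂ : ∀ x : ℝ, HasDerivAt F₂ (B x) x := by
    intro x
    have h := ((hratio x).add (harc x)).const_mul (lam ^ 3 / (2 * c))
    convert h using 1
    · rfl
    · rfl
    · rfl
    rw [hrel x]
    have hh := (hcosh x).ne'
    simp only [hB]
    field_simp
    linear_combination (2 : ℝ) * hrel x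
  -- limits
  have hcx_top : Filter.Tendsto (fun x : ℝ => c * x) Filter.atTop Filter.atTop :=
    Filter.Tendsto.const_mul_atTop hc tendsto_id
  have hcx_bot : Filter.Tendsto (fun x : ℝ => c * x) Filter.atBot Filter.atBot :=
    Filter.Tendsto.const_mul_atBot hc tendsto_id
  have hch_top : Filter.Tendsto (fun x : ℝ => Real.cosh (c * x)) Filter.atTop Filter.atTop :=
    tendsto_cosh_top.comp hcx_top
  have hch_bot : Filter.Tendsto (fun x : ℝ => Real.cosh (c * x)) Filter.atBot Filter.atTop :=
    tendsto_cosh_bot.comp hcx_bot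
  have hinv_top : Filter.Tendsto (fun x : ℝ => (Real.cosh (c * x))⁻¹) Filter.atTop (nhds 0) :=
    hch_top.inv_tendsto_atTop
  have hinv_bot : Filter.Tendsto (fun x : ℝ => (Real.cosh (c * x))⁻¹) Filter.atBot (nhds 0) :=
    hch_bot.inv_tendsto_atTop
  have hratio_bound : ∀ x : ℝ, ‖Real.sinh (c * x) / Real.cosh (c * x) ^ 2‖ ≤
      (Real.cosh (c * x))⁻¹ := by
    intro x
    rw [Real.norm_eq_abs, abs_div, abs_pow, abs_of_pos (hcosh x),
      div_le_iff₀ (by positivity), inv_mul_eq_div, le_div_iff₀ (hcosh x)]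
    nlinarith [abs_sinh_le_cosh (c * x), hcosh x, abs_nonneg (Real.sinh (c * x))]
  have hratio_top : Filter.Tendsto (fun x : ℝ => Real.sinh (c * x) / Real.cosh (c * x) ^ 2)
      Filter.atTop (nhds 0) := squeeze_zero_norm hratio_bound hinv_top
  have hratio_bot : Filter.Tendsto (fun x : ℝ => Real.sinh (c * x) / Real.cosh (c * x) ^ 2)
      Filter.atBot (nhds 0) := squeeze_zero_norm hratio_bound hinv_bot
  have harc_top : Filter.Tendsto (fun x : ℝ => Real.arctan (Real.sinh (c * x))) Filter.atTop
      (nhds (Real.pi / 2)) :=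
    (tendsto_nhds_of_tendsto_nhdsWithin Real.tendsto_arctan_atTop).comp
      (tendsto_sinh_top.comp hcx_top)
  have harc_bot : Filter.Tendsto (fun x : ℝ => Real.arctan (Real.sinh (c * x))) Filter.atBot
      (nhds (-(Real.pi / 2))) :=
    (tendsto_nhds_of_tendsto_nhdsWithin Real.tendsto_arctan_atBot).comp
      (tendsto_sinh_bot.comp hcx_bot)
  have hF₁_top : Filter.Tendsto F₁ Filter.atTop (nhds (lam * c / 8 * (Real.pi / 2 - 0))) :=
    (harc_top.sub hratio_top).const_mul _
  have hF₁_bot : Filter.Tendsto F₁ Filter.atBot (nhds (lam * c / 8 * (-(Real.pi / 2) - 0))) :=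
    (harc_bot.sub hratio_bot).const_mul _
  have hF₂_top : Filter.Tendsto F₂ Filter.atTop
      (nhds (lam ^ 3 / (2 * c) * (0 + Real.pi / 2))) :=
    (hratio_top.add harc_top).const_mul _
  have hF₂_bot : Filter.Tendsto F₂ Filter.atBot
      (nhds (lam ^ 3 / (2 * c) * (0 + -(Real.pi / 2)))) :=
    (hratio_bot.add harc_bot).const_mul _
  -- integrability
  have hkey : ∀ x : ℝ, (Real.cosh (c * x))⁻¹ ≤ (1 + 2 / c ^ 2) * (1 + x ^ 2)⁻¹ := by
    intro x
    have hx2 : 2 / c ^ 2 * (c ^ 2 * x ^ 2) = 2 * x ^ 2 := by field_simp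
    have hcl := cosh_lb (c * x)
    have hKpos : (0:ℝ) < 1 + 2 / c ^ 2 := by positivity
    have h1 : (1:ℝ) + x ^ 2 ≤ (1 + 2 / c ^ 2) * Real.cosh (c * x) := by
      nlinarith [mul_le_mul_of_nonneg_left hcl hKpos.le, hx2, sq_nonneg x,
        sq_nonneg (c * x), le_of_lt (show (0:ℝ) < 2 / c ^ 2 by positivity)]
    calc (Real.cosh (c * x))⁻¹ = 1 / Real.cosh (c * x) := (one_div _).symm
      _ ≤ (1 + 2 / c ^ 2) / (1 + x ^ 2) := by
          rw [div_le_div_iff₀ (hcosh x) (by positivity)]; nlinarith [h1]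
      _ = (1 + 2 / c ^ 2) * (1 + x ^ 2)⁻¹ := by rw [div_eq_mul_inv]
  have hs2 : ∀ x : ℝ, Real.sinh (c * x) ^ 2 ≤ Real.cosh (c * x) ^ 2 := by
    intro x
    nlinarith [abs_sinh_le_cosh (c * x), abs_nonneg (Real.sinh (c * x)),
      sq_abs (Real.sinh (c * x))]
  have hAbound : ∀ x : ℝ, ‖A x‖ ≤
      (lam * c ^ 2 / 4 * (1 + 2 / c ^ 2)) * (1 + x ^ 2)⁻¹ := by
    intro x
    have hh := hcosh x
    have h1 : Real.sinh (c * x) ^ 2 / Real.cosh (c * x) ^ 3 ≤ (Real.cosh (c * x))⁻¹ := by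
      rw [div_le_iff₀ (by positivity), inv_mul_eq_div, le_div_iff₀ hh]
      nlinarith [hs2 x]
    have h2 := (h1.trans (hkey x))
    rw [Real.norm_eq_abs, abs_of_nonneg (by positivity)]
    simp only [hA]
    calc lam * c ^ 2 / 4 * (Real.sinh (c * x) ^ 2 / Real.cosh (c * x) ^ 3)
        ≤ lam * c ^ 2 / 4 * ((1 + 2 / c ^ 2) * (1 + x ^ 2)⁻¹) := by
          apply mul_le_mul_of_nonneg_left h2 (by positivity)
      _ = (lam * c ^ 2 / 4 * (1 + 2 / c ^ 2)) * (1 + x ^ 2)⁻¹ := by ring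
  have hBbound : ∀ x : ℝ, ‖B x‖ ≤ (lam ^ 3 * (1 + 2 / c ^ 2)) * (1 + x ^ 2)⁻¹ := by
    intro x
    have hh := hcosh x
    have hh1 := Real.one_le_cosh (c * x)
    have h1 : (1 / Real.cosh (c * x)) ^ 3 ≤ (Real.cosh (c * x))⁻¹ := by
      rw [div_pow, one_pow, div_le_iff₀ (by positivity), inv_mul_eq_div, le_div_iff₀ hh]
      nlinarith [mul_le_mul_of_nonneg_left hh1 (sq_nonneg (Real.cosh (c * x))),
        mul_le_mul_of_nonneg_left hh1 hh.le]
    have h2 := h1.trans (hkey x)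
    rw [Real.norm_eq_abs, abs_of_nonneg (by positivity)]
    simp only [hB]
    calc lam ^ 3 * (1 / Real.cosh (c * x)) ^ 3
        ≤ lam ^ 3 * ((1 + 2 / c ^ 2) * (1 + x ^ 2)⁻¹) := by
          apply mul_le_mul_of_nonneg_left h2 (by positivity)
      _ = (lam ^ 3 * (1 + 2 / c ^ 2)) * (1 + x ^ 2)⁻¹ := by ring
  have contA : Continuous A := by
    apply Continuous.mul continuous_const
    exact Continuous.div (by fun_prop) (by fun_prop) (fun x => by positivity)
  have contB : Continuous B := by
    apply Continuous.mul continuous_const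
    exact Continuous.pow (Continuous.div continuous_const (by fun_prop)
      (fun x => (hcosh x).ne')) 3
  have hAint : Integrable A := by
    refine (integrable_inv_one_add_sq.const_mul
      (lam * c ^ 2 / 4 * (1 + 2 / c ^ 2))).mono' contA.aestronglyMeasurable ?_
    exact Filter.Eventually.of_forall hAbound
  have hBint : Integrable B := by
    refine (integrable_inv_one_add_sq.const_mul
      (lam ^ 3 * (1 + 2 / c ^ 2))).mono' contB.aestronglyMeasurable ?_
    exact Filter.Eventually.of_forall hBbound
  -- the two integrals
  have hIA : ∫ x : ℝ, A x =
      lam * c / 8 * (Real.pi / 2 - 0) - lam * c / 8 * (-(Real.pi / 2) - 0) :=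
    MeasureTheory.integral_of_hasDerivAt_of_tendsto hF₁ hAint hF₁_bot hF₁_top
  have hIB : ∫ x : ℝ, B x =
      lam ^ 3 / (2 * c) * (0 + Real.pi / 2) - lam ^ 3 / (2 * c) * (0 + -(Real.pi / 2)) :=
    MeasureTheory.integral_of_hasDerivAt_of_tendsto hF₂ hBint hF₂_bot hF₂_top
  have e1 : (fun x : ℝ => (deriv φ x) ^ 2) = A := funext fun x => by
    rw [(hphi x).deriv]; exact hDsq x
  have e2 : (fun x : ℝ =>
      (Real.sqrt lam * Real.sqrt (1 / Real.cosh (c * x))) ^ 6) = B :=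
    funext fun x => hpow6 x
  rw [show (∫ x : ℝ, (deriv φ x) ^ 2) = ∫ x : ℝ, A x from by rw [e1],
    show (∫ x : ℝ, (Real.sqrt lam * Real.sqrt (1 / Real.cosh (c * x))) ^ 6)
      = ∫ x : ℝ, B x from by rw [e2], hIA, hIB]
  have hs3 : Real.sqrt 3 ^ 2 = 3 := Real.sq_sqrt (by norm_num)
  rw [hc_def]
  field_simp
  linear_combination (-(16 * lam ^ 2 * Real.pi)) * hs3
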